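/- Let H be a Hopf *-algebra, A an H-module *-algebra (so (h▷a)* = S^{-1}(h*)▷a*), and (δ,σ) a modular pair in involution with a δ-invariant σ-trace τ: A → k. Then the Connes–Moscovici characteristic map χ_τ(h^1⊗...⊗h^n)(a_0,...,a_n) = τ(a_0 (h^1▷a_1)···(h^n▷a_n)) intertwines the involutions: w_n(χ_τ(h^1⊗...⊗h^n)) = χ_τ(σS^{-1}((h^n)*) ⊗ ... ⊗ σS^{-1}((h^1)*)). -/

import Mathlib

open TensorProduct

/- STATEMENT 8: Let H be a Hopf *-algebra, A an H-module *-algebra (so (h▷a)* = S⁻¹(h*)▷a*),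
and (δ,σ) a modular pair in involution with a δ-invariant σ-trace τ : A → k.  Then the
Connes–Moscovici characteristic map
  χ_τ(h^1⊗...⊗h^n)(a_0,...,a_n) = τ(a_0 (h^1▷a_1)···(h^n▷a_n))
intertwines the involutions:
  w_n(χ_τ(h^1⊗...⊗h^n)) = χ_τ(σS^{-1}((h^n)*) ⊗ ... ⊗ σS^{-1}((h^1)*)).
The identity is expressed on elementary tensors h^1⊗...⊗h^n, i.e. on tuples. -/

variable {k H A : Type*}

/-- The involution on algebra cochains: `(w_n φ)(a_0,...,a_n) = conj φ(a_0*, a_n*, ..., a_1*)`. -/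
noncomputable def cycW [Star k] [Star A] (n : ℕ)
    (φ : (Fin (n + 1) → A) → k) : (Fin (n + 1) → A) → k :=
  fun a => star (φ (fun j => star (a (-j))))

/-- The Connes–Moscovici characteristic map on elementary tensors:
`χ_τ(h^1⊗...⊗h^n)(a_0,...,a_n) = τ(a_0 (h^1▷a_1)···(h^n▷a_n))`. -/
noncomputable def chiCM [Ring A] (τ : A → k) (act : H → A → A) (n : ℕ)
    (h : Fin n → H) : (Fin (n + 1) → A) → k :=
  fun a => τ (a 0 * (List.ofFn fun i : Fin n => act (h i) (a i.succ)).prod)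

/-- The involution on `H^⊗n` (on elementary tensors):
`w_n(h^1⊗...⊗h^n) = σS⁻¹((h^n)*) ⊗ ... ⊗ σS⁻¹((h^1)*)`. -/
noncomputable def hopfWtup [Ring H] [Star H] (Sinv : H → H) (σ : H) (n : ℕ)
    (h : Fin n → H) : Fin n → H :=
  fun j => σ * Sinv (star (h (Fin.rev j)))

/-- star of a product of a list given by `List.ofFn`, reversing the order. -/
lemma star_ofFn_prod {M : Type*} [Monoid M] [StarMul M] :
    ∀ (n : ℕ) (f : Fin n → M),
      star (List.ofFn f).prod = (List.ofFn fun j => star (f (Fin.rev j))).prod := by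
  intro n
  induction n with
  | zero => intro f; simp
  | succ m ih =>
    intro f
    rw [List.ofFn_succ, List.prod_cons, star_mul, ih (fun i => f i.succ),
      List.ofFn_succ' (fun j => star (f (Fin.rev j)))]
    simp [Fin.rev_last, Fin.rev_castSucc]

/-- key index identity: `-(Fin.rev j).succ = j.succ` in `Fin (n+1)`. -/
lemma neg_rev_succ {n : ℕ} (j : Fin n) :
    -((Fin.rev j).succ) = (j.succ : Fin (n + 1)) := by
  rw [neg_eq_iff_add_eq_zero]
  apply Fin.ext
  have hj := j.isLt
  simp only [Fin.add_def, Fin.val_succ, Fin.val_rev, Fin.val_zero]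
  have e : n - (↑j + 1) + 1 + (↑j + 1) = n + 1 := by omega
  rw [e, Nat.mod_self]

theorem chiCM_star_equivariant
    [Field k] [StarRing k] [CharZero k]
    [Ring H] [Algebra k H] [StarRing H]
    [Ring A] [Algebra k A] [StarRing A]
    (comul : H →ₗ[k] H ⊗[k] H) (ε : H → k) (S Sinv : H → H) (δ : H → k) (σ : H)
    (act : H → A → A) (τ : A → k)
    -- Hopf *-algebra axioms (the ones involving the antipode and the *-structure):
    (hSinvS : ∀ h, Sinv (S h) = h) (hSSinv : ∀ h, S (Sinv h) = h)
    (hstarS : ∀ h : H, S (star h) = star (Sinv h))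
    -- (δ, σ) is a modular pair in involution, with σ self-adjoint:
    (hδmul : ∀ g h, δ (g * h) = δ g * δ h) (hδone : δ 1 = 1) (hδσ : δ σ = 1)
    (hσgrouplike : comul σ = σ ⊗ₜ[k] σ) (hστ : star σ = σ)
    -- A is an H-module algebra:
    (hact_act : ∀ g h a, act g (act h a) = act (g * h) a) (hact_one : ∀ a, act 1 a = a)
    (hact_unit : ∀ h : H, act h (1 : A) = algebraMap k A (ε h))
    (hmodalg : ∀ (h : H) (a b : A) (ι : Type) (_ : Fintype ι) (u v : ι → H),
      comul h = ∑ j : ι, u j ⊗ₜ[k] v j →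
        act h (a * b) = ∑ j : ι, act (u j) a * act (v j) b)
    -- the *-action compatibility (h▷a)* = S⁻¹(h*)▷a*:
    (hact_star : ∀ (h : H) (a : A), star (act h a) = act (Sinv (star h)) (star a))
    -- τ is a δ-invariant σ-trace, compatible with the *-structures:
    (hτδ : ∀ (h : H) (a : A), τ (act h a) = δ h * τ a)
    (hτtrace : ∀ a b : A, τ (a * b) = τ (b * act σ a))
    (hτstar : ∀ a : A, star (τ a) = τ (star a))
    (n : ℕ) (h : Fin n → H) :
    cycW n (chiCM τ act n h) = chiCM τ act n (hopfWtup Sinv σ n h) := by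
  have hσmul : ∀ a b : A, act σ (a * b) = act σ a * act σ b := by
    intro a b
    have := hmodalg σ a b Unit inferInstance (fun _ => σ) (fun _ => σ) (by simp [hσgrouplike])
    simpa using this
  have hσprod : ∀ (l : List A) (x : A),
      act σ (x * l.prod) = act σ x * (l.map (act σ)).prod := by
    intro l
    induction l with
    | nil => intro x; simp
    | cons y t ih =>
      intro x
      rw [List.prod_cons, ← mul_assoc, ih (x * y), hσmul, List.map_cons, List.prod_cons,
        mul_assoc]
  funext a
  show star (chiCM τ act n h fun j => star (a (-j))) = _
  unfold chiCM
  rw [hτstar, star_mul, star_star, neg_zero, star_ofFn_prod]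
  simp only [hact_star, star_star, neg_rev_succ]
  unfold hopfWtup
  cases n with
  | zero => simp
  | succ m =>
    rw [hτtrace]
    congr 1
    rw [List.ofFn_succ, List.prod_cons, hσprod, List.map_ofFn,
      List.ofFn_succ (f := fun i : Fin (m + 1) =>
        act (σ * Sinv (star (h (Fin.rev i)))) (a i.succ)), List.prod_cons]
    simp only [Function.comp_def, hact_act]
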